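/- In M̂_•^{F₁,F₂}, if T ⊆ T' ⊆ T'' and T is Nerode equivalent to T'', then T is Nerode equivalent to T'. Each Nerode class is a union of intervals in the inclusion order on tableaux. -/

import Mathlib

/-- The action of a pair of transformations on a tableau:
`T·(f,g) = {(f i, g j) | (i,j) ∈ T}`. -/
def act {m n : ℕ} (a : (Fin m → Fin m) × (Fin n → Fin n))
    (T : Set (Fin m × Fin n)) : Set (Fin m × Fin n) :=
  (fun p => (a.1 p.1, a.2 p.2)) '' T

/-- The extended pure action `d^w` of the automaton `M̂_•^{F₁,F₂}`. -/
def drun {m n : ℕ} (w : List ((Fin m → Fin m) × (Fin n → Fin n)))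
    (T : Set (Fin m × Fin n)) : Set (Fin m × Fin n) :=
  w.foldl (fun T a => act a T) T

/-- Nerode equivalence in `M̂` with final zone `F`: after reading any word the
two reached tableaux are both final (meet `F`) or both non-final. -/
def NerodeHat {m n : ℕ} (F : Set (Fin m × Fin n))
    (T T' : Set (Fin m × Fin n)) : Prop :=
  ∀ w : List ((Fin m → Fin m) × (Fin n → Fin n)),
    (drun w T ∩ F).Nonempty ↔ (drun w T' ∩ F).Nonempty

lemma drun_mono {m n : ℕ} (w : List ((Fin m → Fin m) × (Fin n → Fin n)))
    {T T' : Set (Fin m × Fin n)} (h : T ⊆ T') : drun w T ⊆ drun w T' := by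
  induction w generalizing T T' with
  | nil => exact h
  | cons a w ih => exact ih (show act a T ⊆ act a T' from Set.image_mono h)

/-- In `M̂_•^{F₁,F₂}`, if `T ⊆ T' ⊆ T''` and `T` is Nerode equivalent to `T''`,
then `T` is Nerode equivalent to `T'`: each Nerode class is a union of
intervals for the inclusion order. -/
theorem nerodeHat_interval (m n : ℕ) (F : Set (Fin m × Fin n))
    (T T' T'' : Set (Fin m × Fin n)) (h1 : T ⊆ T') (h2 : T' ⊆ T'')
    (h : NerodeHat F T T'') : NerodeHat F T T' := by
  intro w
  constructor
  · exact fun hne => hne.mono (Set.inter_subset_inter_left _ (drun_mono w h1))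
  · intro hne
    exact (h w).mpr (hne.mono (Set.inter_subset_inter_left _ (drun_mono w h2)))
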